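/- Let Ω be a properly convex domain, x, y ∈ ∂Ω with [x,y] ⊂ ∂Ω, and let a ∈ F_Ω(x), b ∈ F_Ω(y). Then [a,b] ⊂ ∂Ω. -/

import Mathlib

open Set Filter Classical

abbrev Ed (d : ℕ) := EuclideanSpace ℝ (Fin d)

/-- A properly convex domain in an affine chart: a bounded open convex nonempty set. -/
def IsProperlyConvex {d : ℕ} (Ω : Set (Ed d)) : Prop :=
  IsOpen Ω ∧ Convex ℝ Ω ∧ Bornology.IsBounded Ω ∧ Ω.Nonempty

/-- The face of `x`: `x` together with all points `q` such that some segment inside the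
closure of `Ω` contains both `x` and `q` in its interior. -/
def face {d : ℕ} (Ω : Set (Ed d)) (x : Ed d) : Set (Ed d) :=
  insert x {q | ∃ u v : Ed d, segment ℝ u v ⊆ closure Ω ∧
    x ∈ openSegment ℝ u v ∧ q ∈ openSegment ℝ u v}

/-- The Hilbert metric on a bounded open convex set, defined via the cross-ratio of
`x`, `y` and the two intersection points of the line through `x, y` with the boundary. -/
noncomputable def hilbertDist {d : ℕ} (Ω : Set (Ed d)) (x y : Ed d) : ℝ :=
  if x = y then 0 else
    let a := x + (sSup {t : ℝ | x + t • (x - y) ∈ Ω}) • (x - y)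
    let b := y + (sSup {t : ℝ | y + t • (y - x) ∈ Ω}) • (y - x)
    Real.log ((‖b - x‖ * ‖y - a‖) / (‖b - y‖ * ‖x - a‖))

lemma face_spec {d : ℕ} {Ω : Set (Ed d)} {x a : Ed d} (hx : x ∈ closure Ω)
    (ha : a ∈ face Ω x) :
    a ∈ closure Ω ∧ ∃ w ∈ closure Ω, ∃ α : ℝ, 0 ≤ α ∧ α < 1 ∧ x = (1-α) • a + α • w := by
  rcases ha with rfl | ⟨u, v, hseg, hxs, has⟩
  · exact ⟨hx, a, hx, 0, le_refl 0, by norm_num, by simp⟩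
  · have haclos : a ∈ closure Ω := hseg (openSegment_subset_segment _ _ _ has)
    obtain ⟨su, sv, hsu, hsv, hsum, hxe⟩ := hxs
    obtain ⟨ru, rv, hru, hrv, hrsum, hae⟩ := has
    refine ⟨haclos, ?_⟩
    rcases lt_trichotomy rv sv with h | h | h
    · have hru' : ru = 1 - rv := by linarith
      have hsu' : su = 1 - sv := by linarith
      subst hru' hsu'
      refine ⟨v, hseg (right_mem_segment _ _ _), (sv - rv)/(1 - rv),
        div_nonneg (by linarith) (by linarith),
        by rw [div_lt_one (by linarith)]; linarith, ?_⟩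
      rw [← hxe, ← hae]
      match_scalars <;> field_simp <;> ring
    · have : ru = su := by linarith
      have : a = x := by rw [← hxe, ← hae, this, (by linarith : rv = sv)]
      exact ⟨a, haclos, 0, le_refl 0, by norm_num, by simp [this]⟩
    · have hru' : ru = 1 - rv := by linarith
      have hsu' : su = 1 - sv := by linarith
      subst hru' hsu'
      refine ⟨u, hseg (left_mem_segment _ _ _), (rv - sv)/rv,
        div_nonneg (by linarith) (by linarith),
        by rw [div_lt_one hrv]; linarith, ?_⟩
      rw [← hxe, ← hae]
      match_scalars <;> field_simp <;> ring


/-- If `[x,y] ⊆ ∂Ω`, `a ∈ F_Ω(x)` and `b ∈ F_Ω(y)`, then `[a,b] ⊆ ∂Ω`. -/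
theorem segment_faces_subset_frontier {d : ℕ} (Ω : Set (Ed d)) (hΩ : IsProperlyConvex Ω)
    (x y : Ed d) (hx : x ∈ frontier Ω) (hy : y ∈ frontier Ω)
    (hxy : segment ℝ x y ⊆ frontier Ω)
    (a b : Ed d) (ha : a ∈ face Ω x) (hb : b ∈ face Ω y) :
    segment ℝ a b ⊆ frontier Ω := by
  obtain ⟨hopen, hconv, _, _⟩ := hΩ
  have hxc : x ∈ closure Ω := hx.1
  have hyc : y ∈ closure Ω := hy.1
  obtain ⟨hac, w, hwc, α, hα0, hα1, hxw⟩ := face_spec hxc ha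
  obtain ⟨hbc, w', hw'c, β, hβ0, hβ1, hyw⟩ := face_spec hyc hb
  rintro z ⟨p, q, hp, hq, hpq, rfl⟩
  have hzc : p • a + q • b ∈ closure Ω :=
    hconv.closure.segment_subset hac hbc ⟨p, q, hp, hq, hpq, rfl⟩
  rw [hopen.frontier_eq]
  refine ⟨hzc, fun hzΩ => ?_⟩
  have hzint : p • a + q • b ∈ interior Ω := by rw [hopen.interior_eq]; exact hzΩ
  set D : ℝ := p * (1 - β) + q * (1 - α) with hD
  have hDpos : 0 < D := by
    rcases lt_or_ge 0 p with hp' | hp'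
    · have h1 : 0 ≤ q * (1 - α) := mul_nonneg hq (by linarith)
      have h2 : 0 < p * (1 - β) := mul_pos hp' (by linarith)
      rw [hD]; linarith
    · have hq' : q = 1 := by linarith
      have hp'' : p = 0 := by linarith
      rw [hD, hq', hp'']; nlinarith
  have hD0 : p * (1 - β) + q * (1 - α) ≠ 0 := by rw [← hD]; exact hDpos.ne'
  set lam : ℝ := q * (1 - α) / D with hlam
  have hlam0 : 0 ≤ lam := div_nonneg (mul_nonneg hq (by linarith)) hDpos.le
  have hlam1 : lam ≤ 1 := by
    rw [hlam, div_le_one hDpos, hD]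
    have : 0 ≤ p * (1 - β) := mul_nonneg hp (by linarith)
    linarith
  set c : ℝ := (1 - α) * (1 - β) / D with hc
  set m : ℝ := p * (1 - β) * α / D with hm
  set n : ℝ := q * (1 - α) * β / D with hn
  have hcpos : 0 < c := div_pos (mul_pos (by linarith) (by linarith)) hDpos
  have hm0 : 0 ≤ m :=
    div_nonneg (mul_nonneg (mul_nonneg hp (by linarith)) hα0) hDpos.le
  have hn0 : 0 ≤ n :=
    div_nonneg (mul_nonneg (mul_nonneg hq (by linarith)) hβ0) hDpos.le
  have hsum : c + (m + n) = 1 := by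
    rw [hc, hm, hn, ← add_div, ← add_div,
      div_eq_one_iff_eq hDpos.ne', hD]
    linear_combination ((α - 1) * (1 - β)) * hpq
  set P : Ed d := (1 - lam) • x + lam • y with hP
  have hPfr : P ∈ frontier Ω := hxy ⟨1 - lam, lam, by linarith, hlam0, by ring, rfl⟩
  have hkey : P = c • (p • a + q • b) + (m • w + n • w') := by
    rw [hP, hxw, hyw]
    simp only [hlam, hc, hm, hn, hD]
    match_scalars <;> (field_simp; try ring)
  have hPint : P ∈ interior Ω := by
    rcases eq_or_lt_of_le (add_nonneg hm0 hn0) with hmn | hmn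
    · have hm' : m = 0 := by linarith
      have hn' : n = 0 := by linarith
      have hc1 : c = 1 := by rw [← hsum, hm', hn']; ring
      rw [hkey, hm', hn', hc1]
      simpa using hzint
    · set w₂ : Ed d := (m / (m + n)) • w + (n / (m + n)) • w' with hw₂
      have hw₂c : w₂ ∈ closure Ω :=
        hconv.closure hwc hw'c (div_nonneg hm0 hmn.le) (div_nonneg hn0 hmn.le)
          (by field_simp)
      have hkey2 : P = c • (p • a + q • b) + (m + n) • w₂ := by
        rw [hkey, hw₂]
        match_scalars <;> field_simp [hmn.ne']
      rw [hkey2]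
      exact hconv.combo_interior_closure_mem_interior hzint hw₂c hcpos (by linarith) hsum
  rw [hopen.frontier_eq] at hPfr
  rw [hopen.interior_eq] at hPint
  exact hPfr.2 hPint
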